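/- For every odd integer n ≥ 3, the set of nonzero real solutions s of the equation 1/s − ⌊s^n⌋ = −1/n is exactly {−n/(n+1)}; equivalently, the unique real solution of x^(−1/n) − ⌊x⌋ = −1/n is x = −(n/(n+1))^n. -/

import Mathlib

/-- For every odd integer `n ≥ 3`, the nonzero real solutions `s` of
`1/s - ⌊s^n⌋ = -1/n` are exactly `s = -n/(n+1)`; equivalently, the unique real
solution of `x^(-1/n) - ⌊x⌋ = -1/n` is `x = -(n/(n+1))^n`. -/
theorem odd_negative_root_floor_equation_unique_solution
    (n : ℕ) (hn : 3 ≤ n) (ho : Odd n) :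
    {s : ℝ | s ≠ 0 ∧ 1 / s - (⌊s ^ n⌋ : ℝ) = -(1 / n)} =
      {-((n : ℝ) / (n + 1))} := by
  have hn3 : (3:ℝ) ≤ n := by exact_mod_cast hn
  have hnpos : (0:ℝ) < n := by linarith
  have hn1 : (0:ℝ) < (n:ℝ) + 1 := by linarith
  ext s
  simp only [Set.mem_setOf_eq, Set.mem_singleton_iff]
  constructor
  · rintro ⟨hs0, heq⟩
    set m : ℤ := ⌊s ^ n⌋ with hm
    have hfl : (m:ℝ) ≤ s ^ n := Int.floor_le _
    have hfu : s ^ n < m + 1 := Int.lt_floor_add_one _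
    have h1s : 1 / s = m - 1 / n := by linarith
    have hinv : (1 / s) * s = 1 := by field_simp
    have h1npos : (0:ℝ) < 1 / n := by positivity
    have h1nlt : 1 / (n:ℝ) ≤ 1 / 3 := by
      apply one_div_le_one_div_of_le <;> linarith
    rcases lt_trichotomy m (-1) with hmlt | hmeq | hmgt
    · -- m ≤ -2
      exfalso
      have hm2 : (m:ℝ) ≤ -2 := by exact_mod_cast (by omega : m ≤ -2)
      have hneg : 1 / s < -1 := by linarith
      have hs_neg : s < 0 := by
        rcases lt_trichotomy s 0 with h | h | h
        · exact h
        · exact absurd h hs0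
        · nlinarith
      have hs_gt : -1 < s := by nlinarith
      have hnegs : (-s) ^ n < 1 :=
        pow_lt_one₀ (by linarith) (by linarith) (by omega)
      have hsn : s ^ n > -1 := by
        have := Odd.neg_pow ho s
        nlinarith
      have : (-1 : ℤ) ≤ m := Int.le_floor.mpr (by push_cast; linarith)
      omega
    · -- m = -1 : the solution
      rw [hmeq] at h1s
      push_cast at h1s
      have hne : (n:ℝ) + 1 ≠ 0 := ne_of_gt hn1
      have hsne : s ≠ 0 := hs0
      field_simp at h1s
      field_simp
      linarith
    · -- m ≥ 0
      exfalso
      have hm0 : 0 ≤ m := by omega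
      rcases lt_trichotomy m 1 with hm1 | hm1 | hm1
      · -- m = 0
        have hmz : m = 0 := by omega
        rw [hmz] at h1s hfl
        push_cast at h1s hfl
        have hsneg : s < 0 := by
          rcases lt_trichotomy s 0 with h | h | h
          · exact h
          · exact absurd h hs0
          · nlinarith
        have : s ^ n < 0 := Odd.pow_neg ho hsneg
        linarith
      · -- m = 1
        rw [hm1] at h1s hfu
        push_cast at h1s hfu
        have hspos : 0 < s := by
          rcases lt_trichotomy s 0 with h | h | h
          · nlinarith
          · exact absurd h hs0
          · exact h
        have hnm1 : (0:ℝ) < (n:ℝ) - 1 := by linarith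
        have hs_eq : s = 1 + 1 / ((n:ℝ) - 1) := by
          have h2 : 1 / s = ((n:ℝ) - 1) / n := by rw [h1s]; field_simp
          field_simp at h2 ⊢
          nlinarith
        have hbern := one_add_mul_le_pow
          (show (-2:ℝ) ≤ 1 / ((n:ℝ) - 1) by
          have : (0:ℝ) < 1 / ((n:ℝ) - 1) := by positivity
          linarith) n
        rw [← hs_eq] at hbern
        have hgt : (1:ℝ) < (n:ℝ) * (1 / ((n:ℝ) - 1)) := by
          rw [mul_one_div, lt_div_iff₀ hnm1]; linarith
        linarith
      · -- m ≥ 2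
        have hm2 : (2:ℝ) ≤ (m:ℝ) := by exact_mod_cast (by omega : (2:ℤ) ≤ m)
        have hbig : 1 < 1 / s := by linarith
        have hspos : 0 < s := by
          rcases lt_trichotomy s 0 with h | h | h
          · nlinarith
          · exact absurd h hs0
          · exact h
        have hs1 : s < 1 := by nlinarith
        have : s ^ n < 1 := pow_lt_one₀ hspos.le hs1 (by omega)
        linarith
  · rintro rfl
    have hppos : (0:ℝ) < (n:ℝ) / (n + 1) := by positivity
    have hplt : (n:ℝ) / (n + 1) < 1 := by
      rw [div_lt_one hn1]; linarith
    have hs0 : -((n:ℝ) / (n + 1)) ≠ 0 := by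
      intro h
      have : (n:ℝ) / (n + 1) = 0 := by linarith [neg_eq_zero.mp h]
      linarith
    refine ⟨hs0, ?_⟩
    have hpow : (-((n:ℝ) / (n + 1))) ^ n = -(((n:ℝ) / (n + 1)) ^ n) :=
      Odd.neg_pow ho _
    have hp01 : 0 < ((n:ℝ) / (n + 1)) ^ n := pow_pos hppos n
    have hp1 : ((n:ℝ) / (n + 1)) ^ n < 1 := pow_lt_one₀ hppos.le hplt (by omega)
    have hfloor : ⌊(-((n:ℝ) / (n + 1))) ^ n⌋ = -1 := by
      rw [hpow]
      apply Int.floor_eq_iff.mpr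
      constructor
      · push_cast; linarith
      · push_cast; linarith
    rw [hfloor]
    push_cast
    rw [one_div, ← neg_inv, inv_div]
    field_simp
    ring
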